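/- Fix u ≥ 2 and characters A, B, $ with Q = {A,B}. For i ∈ [2,u] let G_i be the string of length i+u consisting of A, then i−2 copies of $, then B, then u copies of $. Let S be a concatenation, for some E = {e₁ < e₂ < ... < e_m} ⊆ [2,u] and positive integers c₁,...,c_m, of c₁ copies of G_{e₁}, then c₂ copies of G_{e₂}, ..., then c_m copies of G_{e_m}. Then for every i ∈ [2,u], δ(i) = c_j if i = e_j for some j, and δ(i) = 0 if i ∈ [2,u] \ E, where δ(i) = lmco(i) − lmco(i−1). -/

import Mathlib

open Finset

/-- `[i,j]` is a co-occurrence of `Q` in the length-`n` string `S` (1-indexed):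
`1 ≤ i ≤ j ≤ n` and every character of `Q` occurs in `S[i..j]`. -/
def Cooc {α : Type*} (n : ℕ) (S : ℕ → α) (Q : Finset α) (i j : ℕ) : Prop :=
  1 ≤ i ∧ i ≤ j ∧ j ≤ n ∧ ∀ c ∈ Q, ∃ k, i ≤ k ∧ k ≤ j ∧ S k = c

/-- `[i,j]` is a left-minimal co-occurrence: a co-occurrence such that `[i+1,j]` is not. -/
def LeftMinCooc {α : Type*} (n : ℕ) (S : ℕ → α) (Q : Finset α) (i j : ℕ) : Prop :=
  Cooc n S Q i j ∧ ¬ Cooc n S Q (i+1) j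

/-- `[i,j]` is a minimal co-occurrence: a co-occurrence such that neither
`[i+1,j]` nor `[i,j-1]` is a co-occurrence. -/
def MinCooc {α : Type*} (n : ℕ) (S : ℕ → α) (Q : Finset α) (i j : ℕ) : Prop :=
  Cooc n S Q i j ∧ ¬ Cooc n S Q (i+1) j ∧ ¬ Cooc n S Q i (j-1)

/-- `lmco n S Q w`: number of left-minimal co-occurrences of `Q` in `S` of length `w`. -/
noncomputable def lmco {α : Type*} (n : ℕ) (S : ℕ → α) (Q : Finset α) (w : ℕ) : ℕ :=
  {p : ℕ × ℕ | LeftMinCooc n S Q p.1 p.2 ∧ p.2 - p.1 + 1 = w}.ncard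

/-- `dlt n S Q i = lmco(i) - lmco(i-1)` as an integer. -/
noncomputable def dlt {α : Type*} (n : ℕ) (S : ℕ → α) (Q : Finset α) (i : ℕ) : ℤ :=
  (lmco n S Q i : ℤ) - (lmco n S Q (i-1) : ℤ)

/-- `coN n S Q w`: number of length-`w` co-occurrences of `Q` in `S`, i.e. the number of
windows `[k-w+1,k]` with `w ≤ k ≤ n` that are co-occurrences. -/
noncomputable def coN {α : Type*} (n : ℕ) (S : ℕ → α) (Q : Finset α) (w : ℕ) : ℕ :=
  {k : ℕ | w ≤ k ∧ k ≤ n ∧ Cooc n S Q (k - w + 1) k}.ncard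

/-- The increment gadget `G_i = A · $^{i-2} · B · $^{u}` (with `$` written `D`). -/
def Gadget {α : Type*} (A B D : α) (u i : ℕ) : List α :=
  A :: (List.replicate (i - 2) D ++ B :: List.replicate u D)

/-- Concatenation of `c 1` copies of `G_{e 1}`, then `c 2` copies of `G_{e 2}`, …,
then `c m` copies of `G_{e m}`. -/
def GadgetString {α : Type*} (A B D : α) (u m : ℕ) (e c : ℕ → ℕ) : List α :=
  ((List.range m).map (fun j => (List.replicate (c (j+1)) (Gadget A B D u (e (j+1)))).flatten)).flatten

section Aux

set_option linter.unusedSectionVars false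
set_option linter.deprecated false
set_option maxHeartbeats 1000000

namespace S16

/-- 0-indexed gadget start positions together with their parameter values. -/
def gads (u : ℕ) : List ℕ → List (ℕ × ℕ)
  | [] => []
  | v :: vs => (0, v) :: (gads u vs).map (fun p => (p.1 + (v + u), p.2))

variable {α : Type*} [DecidableEq α] {A B D : α} {u : ℕ} {vs : List ℕ}

lemma gads_snd (u : ℕ) (vs : List ℕ) : (gads u vs).map Prod.snd = vs := by
  induction vs with
  | nil => rfl
  | cons v vs ih => simp [gads, List.map_map, Function.comp_def, ih]

lemma mem_gads_snd {p : ℕ × ℕ} (h : p ∈ gads u vs) : p.2 ∈ vs := by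
  rw [← gads_snd u vs]; exact List.mem_map_of_mem h

lemma mem_gads_snd' {p : ℕ × ℕ} (h2 : ∀ v ∈ vs, 2 ≤ v) (h : p ∈ gads u vs) : 2 ≤ p.2 :=
  h2 _ (mem_gads_snd h)

lemma gadget_length {v : ℕ} (hv : 2 ≤ v) : (Gadget A B D u v).length = v + u := by
  simp [Gadget]; omega

lemma flatten_cons_length {v : ℕ} (hv : 2 ≤ v) :
    (((v :: vs).map (Gadget A B D u)).flatten).length
      = (v + u) + ((vs.map (Gadget A B D u)).flatten).length := by
  rw [List.map_cons, List.flatten_cons, List.length_append, gadget_length hv]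

lemma gads_bound (h2 : ∀ v ∈ vs, 2 ≤ v) :
    ∀ p ∈ gads u vs, p.1 + p.2 + u ≤ ((vs.map (Gadget A B D u)).flatten).length := by
  induction vs with
  | nil => simp [gads]
  | cons v vs ih =>
    intro p hp
    have hv : 2 ≤ v := h2 v (List.mem_cons_self)
    rw [flatten_cons_length hv]
    rcases List.mem_cons.1 hp with h | h
    · subst h; dsimp only; omega
    · rcases List.mem_map.1 h with ⟨q, hq, rfl⟩
      have := ih (fun x hx => h2 x (List.mem_cons_of_mem _ hx)) q hq
      dsimp only; omega

lemma gads_order : ∀ p ∈ gads u vs, ∀ q ∈ gads u vs, p.1 < q.1 → p.1 + p.2 + u ≤ q.1 := by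
  induction vs with
  | nil => simp [gads]
  | cons v vs ih =>
    intro p hp q hq hlt
    rcases List.mem_cons.1 hp with h | h
    · subst h
      rcases List.mem_cons.1 hq with h' | h'
      · subst h'; omega
      · rcases List.mem_map.1 h' with ⟨q', hq', rfl⟩
        dsimp only; omega
    · rcases List.mem_map.1 h with ⟨p', hp', rfl⟩
      rcases List.mem_cons.1 hq with h' | h'
      · subst h'; dsimp only at hlt; omega
      · rcases List.mem_map.1 h' with ⟨q', hq', rfl⟩
        dsimp only at hlt ⊢
        have := ih p' hp' q' hq' (by omega)
        omega

lemma gads_fst_inj (h2 : ∀ v ∈ vs, 2 ≤ v) :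
    ∀ p ∈ gads u vs, ∀ q ∈ gads u vs, p.1 = q.1 → p = q := by
  induction vs with
  | nil => simp [gads]
  | cons v vs ih =>
    intro p hp q hq heq
    have hv : 2 ≤ v := h2 v (List.mem_cons_self)
    have h2' : ∀ x ∈ vs, 2 ≤ x := fun x hx => h2 x (List.mem_cons_of_mem _ hx)
    rcases List.mem_cons.1 hp with h | h <;> rcases List.mem_cons.1 hq with h' | h'
    · subst h; subst h'; rfl
    · subst h; rcases List.mem_map.1 h' with ⟨q', hq', rfl⟩
      dsimp only at heq; omega
    · subst h'; rcases List.mem_map.1 h with ⟨p', hp', rfl⟩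
      dsimp only at heq; omega
    · rcases List.mem_map.1 h with ⟨p', hp', rfl⟩
      rcases List.mem_map.1 h' with ⟨q', hq', rfl⟩
      have : p' = q' := ih h2' p' hp' q' hq' (by dsimp only at heq; omega)
      rw [this]

lemma gads_nodup (h2 : ∀ v ∈ vs, 2 ≤ v) : (gads u vs).Nodup := by
  induction vs with
  | nil => simp [gads]
  | cons v vs ih =>
    have hv : 2 ≤ v := h2 v (List.mem_cons_self)
    have h2' : ∀ x ∈ vs, 2 ≤ x := fun x hx => h2 x (List.mem_cons_of_mem _ hx)
    refine List.Nodup.cons ?_ ((ih h2').map ?_)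
    · intro hmem
      rcases List.mem_map.1 hmem with ⟨p, hp, heq⟩
      have : p.1 + (v + u) = 0 := by
        have := congrArg Prod.fst heq; simpa using this
      omega
    · intro a b hab
      have h1 := congrArg Prod.fst hab
      have h2 := congrArg Prod.snd hab
      dsimp only at h1 h2
      ext <;> omega

lemma replicate_getD (n k : ℕ) : (List.replicate n D).getD k D = D := by
  rw [List.getD_eq_getElem?_getD, List.getElem?_replicate]
  split <;> rfl

lemma gadget_getD {v : ℕ} (hv : 2 ≤ v) (idx : ℕ) (hidx : idx < v + u) :
    (Gadget A B D u v).getD idx D = if idx = 0 then A else if idx = v - 1 then B else D := by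
  unfold Gadget
  match idx with
  | 0 => simp
  | (k+1) =>
    rw [List.getD_cons_succ]
    rcases Nat.lt_or_ge k (v - 2) with h | h
    · rw [List.getD_append _ _ _ k (by simp; omega), replicate_getD]
      rw [if_neg (by omega), if_neg (by omega)]
    · rw [List.getD_append_right _ _ _ _ (by simp; omega)]
      simp only [List.length_replicate]
      rcases Nat.eq_or_lt_of_le h with h' | h'
      · have : k - (v - 2) = 0 := by omega
        rw [this, List.getD_cons_zero, if_neg (by omega), if_pos (by omega)]
      · obtain ⟨j, hj⟩ : ∃ j, k - (v - 2) = j + 1 := ⟨k - (v-2) - 1, by omega⟩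
        rw [hj, List.getD_cons_succ, replicate_getD]
        rw [if_neg (by omega), if_neg (by omega)]

lemma getD_eq_A (hAB : A ≠ B) (hAD : A ≠ D) : ∀ (vs : List ℕ), (∀ v ∈ vs, 2 ≤ v) → ∀ (idx : ℕ),
    (((vs.map (Gadget A B D u)).flatten).getD idx D = A)
      ↔ ∃ p ∈ gads u vs, idx = p.1 := by
  intro vs
  induction vs with
  | nil => intro _ idx; simpa [gads] using hAD.symm
  | cons v vs ih =>
    intro h2 idx
    have hv : 2 ≤ v := h2 v (List.mem_cons_self)
    have h2' : ∀ x ∈ vs, 2 ≤ x := fun x hx => h2 x (List.mem_cons_of_mem _ hx)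
    have hlen : (Gadget A B D u v).length = v + u := gadget_length hv
    rw [List.map_cons, List.flatten_cons]
    by_cases hidx : idx < v + u
    · rw [List.getD_append _ _ _ idx (by omega), gadget_getD hv idx hidx]
      constructor
      · intro h
        split_ifs at h with h0 h1
        · exact ⟨(0, v), List.mem_cons_self, h0⟩
        · exact absurd h.symm hAB
        · exact absurd h.symm hAD
      · rintro ⟨p, hp, rfl⟩
        rcases List.mem_cons.1 hp with rfl | hp'
        · simp
        · rcases List.mem_map.1 hp' with ⟨q, hq, rfl⟩
          exact absurd hidx (by dsimp only; omega)
    · rw [List.getD_append_right _ _ _ _ (by omega), hlen, ih h2' (idx - (v+u))]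
      constructor
      · rintro ⟨q, hq, hq'⟩
        exact ⟨(q.1 + (v + u), q.2),
          List.mem_cons_of_mem _ (List.mem_map.2 ⟨q, hq, rfl⟩), by dsimp only; omega⟩
      · rintro ⟨p, hp, rfl⟩
        rcases List.mem_cons.1 hp with rfl | hp'
        · exact absurd hidx (by dsimp only; omega)
        · rcases List.mem_map.1 hp' with ⟨q, hq, rfl⟩
          exact ⟨q, hq, by dsimp only; omega⟩

lemma getD_eq_B (hAB : A ≠ B) (hBD : B ≠ D) : ∀ (vs : List ℕ), (∀ v ∈ vs, 2 ≤ v) → ∀ (idx : ℕ),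
    (((vs.map (Gadget A B D u)).flatten).getD idx D = B)
      ↔ ∃ p ∈ gads u vs, idx = p.1 + p.2 - 1 := by
  intro vs
  induction vs with
  | nil => intro _ idx; simpa [gads] using hBD.symm
  | cons v vs ih =>
    intro h2 idx
    have hv : 2 ≤ v := h2 v (List.mem_cons_self)
    have h2' : ∀ x ∈ vs, 2 ≤ x := fun x hx => h2 x (List.mem_cons_of_mem _ hx)
    have hlen : (Gadget A B D u v).length = v + u := gadget_length hv
    rw [List.map_cons, List.flatten_cons]
    by_cases hidx : idx < v + u
    · rw [List.getD_append _ _ _ idx (by omega), gadget_getD hv idx hidx]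
      constructor
      · intro h
        split_ifs at h with h0 h1
        · exact absurd h hAB
        · exact ⟨(0, v), List.mem_cons_self, by dsimp only; omega⟩
        · exact absurd h.symm hBD
      · rintro ⟨p, hp, hp1⟩
        rcases List.mem_cons.1 hp with rfl | hp'
        · dsimp only at hp1
          rw [if_neg (by omega), if_pos (by omega)]
        · rcases List.mem_map.1 hp' with ⟨q, hq, rfl⟩
          have hq2 : 2 ≤ q.2 := mem_gads_snd' h2' hq
          dsimp only at hp1
          omega
    · rw [List.getD_append_right _ _ _ _ (by omega), hlen, ih h2' (idx - (v+u))]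
      constructor
      · rintro ⟨q, hq, hq'⟩
        have hq2 : 2 ≤ q.2 := mem_gads_snd' h2' hq
        exact ⟨(q.1 + (v + u), q.2),
          List.mem_cons_of_mem _ (List.mem_map.2 ⟨q, hq, rfl⟩), by dsimp only; omega⟩
      · rintro ⟨p, hp, hp1⟩
        rcases List.mem_cons.1 hp with rfl | hp'
        · dsimp only at hp1; omega
        · rcases List.mem_map.1 hp' with ⟨q, hq, rfl⟩
          have hq2 : 2 ≤ q.2 := mem_gads_snd' h2' hq
          dsimp only at hp1
          exact ⟨q, hq, by omega⟩

/-- The central counting lemma: for `1 ≤ w ≤ u` the number of left-minimal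
co-occurrences of `{A,B}` of length `w` equals the number of gadgets with value `≤ w`. -/
lemma lmco_count (hAB : A ≠ B) (hAD : A ≠ D) (hBD : B ≠ D) (hu : 2 ≤ u)
    (h2 : ∀ v ∈ vs, 2 ≤ v) {w : ℕ} (hw1 : 1 ≤ w) (hwu : w ≤ u) :
    lmco ((vs.map (Gadget A B D u)).flatten).length
      (fun k => ((vs.map (Gadget A B D u)).flatten).getD (k-1) D) ({A, B} : Finset α) w
      = (gads u vs).countP (fun p => decide (p.2 ≤ w)) := by
  have SA : ∀ k : ℕ, 1 ≤ k →
      ((((vs.map (Gadget A B D u)).flatten).getD (k-1) D = A)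
        ↔ ∃ p ∈ gads u vs, k = p.1 + 1) := by
    intro k hk
    rw [getD_eq_A hAB hAD vs h2 (k-1)]
    constructor
    · rintro ⟨p, hp, h⟩; exact ⟨p, hp, by omega⟩
    · rintro ⟨p, hp, h⟩; exact ⟨p, hp, by omega⟩
  have SB : ∀ k : ℕ, 1 ≤ k →
      ((((vs.map (Gadget A B D u)).flatten).getD (k-1) D = B)
        ↔ ∃ p ∈ gads u vs, k = p.1 + p.2) := by
    intro k hk
    rw [getD_eq_B hAB hBD vs h2 (k-1)]
    constructor
    · rintro ⟨p, hp, h⟩; exact ⟨p, hp, by have := mem_gads_snd' h2 hp; omega⟩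
    · rintro ⟨p, hp, h⟩; exact ⟨p, hp, by have := mem_gads_snd' h2 hp; omega⟩
  have hAQ : A ∈ ({A, B} : Finset α) := by simp
  have hBQ : B ∈ ({A, B} : Finset α) := by simp
  have hset : {p : ℕ × ℕ | LeftMinCooc ((vs.map (Gadget A B D u)).flatten).length
        (fun k => ((vs.map (Gadget A B D u)).flatten).getD (k-1) D)
        ({A, B} : Finset α) p.1 p.2 ∧ p.2 - p.1 + 1 = w}
      = (fun p : ℕ × ℕ => (p.1 + 1, p.1 + w)) ''
        {p : ℕ × ℕ | p ∈ (gads u vs).filter (fun p => decide (p.2 ≤ w))} := by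
    ext ⟨i, j⟩
    simp only [Set.mem_setOf_eq, LeftMinCooc, Cooc, Set.mem_image, List.mem_filter,
      decide_eq_true_eq, Prod.mk.injEq]
    constructor
    · rintro ⟨⟨⟨hi1, hij, hjn, hall⟩, hnc⟩, hw⟩
      obtain ⟨kA, hkA1, hkA2, hkAA⟩ := hall A hAQ
      obtain ⟨kB, hkB1, hkB2, hkBB⟩ := hall B hBQ
      have hiA : ((vs.map (Gadget A B D u)).flatten).getD (i-1) D = A := by
        by_cases hiA : ((vs.map (Gadget A B D u)).flatten).getD (i-1) D = A
        · exact hiA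
        by_cases hiB : ((vs.map (Gadget A B D u)).flatten).getD (i-1) D = B
        · exfalso
          obtain ⟨q, hq, hqe⟩ := (SB i hi1).1 hiB
          have hq2 := mem_gads_snd' h2 hq
          have hkAi : kA ≠ i := by rintro rfl; exact hiA hkAA
          obtain ⟨r, hr, hre⟩ := (SA kA (by omega)).1 hkAA
          have hr2 := mem_gads_snd' h2 hr
          have hlt : q.1 < r.1 := by omega
          have := gads_order q hq r hr hlt
          omega
        · exact absurd ⟨by omega, by
            have hkAi : kA ≠ i := fun h => hiA (h ▸ hkAA)
            omega, hjn, fun ch hch => by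
            rcases Finset.mem_insert.1 hch with rfl | hch
            · have hkAi : kA ≠ i := fun h => hiA (h ▸ hkAA)
              exact ⟨kA, by omega, hkA2, hkAA⟩
            · rw [Finset.mem_singleton.1 hch]
              have hkBi : kB ≠ i := fun h => hiB (h ▸ hkBB)
              exact ⟨kB, by omega, hkB2, hkBB⟩⟩ hnc
      obtain ⟨p, hp, hpe⟩ := (SA i hi1).1 hiA
      have hp2 := mem_gads_snd' h2 hp
      obtain ⟨q, hq, hqe⟩ := (SB kB (by omega)).1 hkBB
      have hq2 := mem_gads_snd' h2 hq
      have hqp : q = p := by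
        rcases Nat.lt_trichotomy q.1 p.1 with h | h | h
        · have := gads_order q hq p hp h; omega
        · exact gads_fst_inj h2 q hq p hp h
        · have := gads_order p hp q hq h; omega
      subst hqp
      exact ⟨q, ⟨hq, by omega⟩, by omega, by omega⟩
    · rintro ⟨p, ⟨hp, hpw⟩, hi, hj⟩
      have hp2 := mem_gads_snd' h2 hp
      have hbound := gads_bound (A := A) (B := B) (D := D) h2 p hp
      subst hi; subst hj
      refine ⟨⟨⟨by omega, by omega, by omega, ?_⟩, ?_⟩, by omega⟩
      · intro ch hch
        rcases Finset.mem_insert.1 hch with rfl | hch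
        · exact ⟨p.1 + 1, le_refl _, by omega, (SA _ (by omega)).2 ⟨p, hp, rfl⟩⟩
        · rw [Finset.mem_singleton.1 hch]
          exact ⟨p.1 + p.2, by omega, by omega, (SB _ (by omega)).2 ⟨p, hp, rfl⟩⟩
      · rintro ⟨-, -, -, hall⟩
        obtain ⟨k, hk1, hk2, hkA⟩ := hall A hAQ
        obtain ⟨r, hr, hre⟩ := (SA k (by omega)).1 hkA
        have hr2 := mem_gads_snd' h2 hr
        have hlt : p.1 < r.1 := by omega
        have := gads_order p hp r hr hlt
        omega
  rw [lmco, hset]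
  have hco : {p : ℕ × ℕ | p ∈ (gads u vs).filter (fun p => decide (p.2 ≤ w))}
      = (((gads u vs).filter (fun p => decide (p.2 ≤ w))).toFinset : Set (ℕ × ℕ)) := by
    ext p; simp
  rw [hco, Set.ncard_image_of_injOn, Set.ncard_coe_finset,
    List.toFinset_card_of_nodup ((gads_nodup h2).filter _),
    ← List.countP_eq_length_filter]
  intro p hp q hq heq
  simp only [Finset.coe_sort_coe, Set.mem_setOf_eq, List.mem_toFinset, List.mem_filter,
    Finset.mem_coe] at hp hq
  have hp' : p ∈ gads u vs := by
    have := hp; exact this.1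
  have hq' : q ∈ gads u vs := by
    have := hq; exact this.1
  have h1 := congrArg Prod.fst heq
  dsimp only at h1
  exact gads_fst_inj h2 p hp' q hq' (by omega)


lemma countP_split (l : List (ℕ × ℕ)) (i : ℕ) (hi : 1 ≤ i) :
    l.countP (fun p => decide (p.2 ≤ i))
      = l.countP (fun p => decide (p.2 ≤ i - 1)) + l.countP (fun p => decide (p.2 = i)) := by
  induction l with
  | nil => simp
  | cons a l ih =>
    simp only [List.countP_cons, ih, decide_eq_true_eq]
    split_ifs <;> omega

lemma countP_snd (i u : ℕ) (vs : List ℕ) :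
    (gads u vs).countP (fun p => decide (p.2 = i)) = vs.countP (fun v => decide (v = i)) := by
  conv_rhs => rw [← gads_snd u vs]
  rw [List.countP_map]
  rfl

lemma countP_flatten_replicate (i m : ℕ) (e c : ℕ → ℕ) :
    (((List.range m).map (fun j => List.replicate (c (j+1)) (e (j+1)))).flatten).countP
      (fun v => decide (v = i))
      = ∑ j ∈ Finset.range m, if e (j+1) = i then c (j+1) else 0 := by
  induction m with
  | zero => simp
  | succ m ih =>
    rw [List.range_succ, List.map_append, List.flatten_append, List.countP_append, ih,
      Finset.sum_range_succ]
    simp [List.countP_replicate]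

end S16

end Aux

theorem stmt16 {α : Type*} [DecidableEq α] (A B D : α)
    (hAB : A ≠ B) (hAD : A ≠ D) (hBD : B ≠ D)
    (u m : ℕ) (hu : 2 ≤ u) (hm : 1 ≤ m) (e c : ℕ → ℕ)
    (he : ∀ j ∈ Finset.Icc 1 m, e j ∈ Finset.Icc 2 u)
    (hmono : ∀ i ∈ Finset.Icc 1 m, ∀ j ∈ Finset.Icc 1 m, i < j → e i < e j)
    (hc : ∀ j ∈ Finset.Icc 1 m, 0 < c j) :
    (∀ j ∈ Finset.Icc 1 m,
        dlt (GadgetString A B D u m e c).length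
          (fun k => (GadgetString A B D u m e c).getD (k-1) D) ({A, B} : Finset α)
          (e j) = c j) ∧
    (∀ i ∈ Finset.Icc 2 u, (∀ j ∈ Finset.Icc 1 m, e j ≠ i) →
        dlt (GadgetString A B D u m e c).length
          (fun k => (GadgetString A B D u m e c).getD (k-1) D) ({A, B} : Finset α)
          i = 0) := by
  classical
  set vs : List ℕ := ((List.range m).map (fun j => List.replicate (c (j+1)) (e (j+1)))).flatten
    with hvs
  have hGS : GadgetString A B D u m e c = (vs.map (Gadget A B D u)).flatten := by
    rw [hvs]
    simp [GadgetString, List.map_flatten, List.flatten_flatten, List.map_map,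
      List.map_replicate, Function.comp_def]
  have h2vs : ∀ v ∈ vs, 2 ≤ v := by
    intro v hv
    rw [hvs] at hv
    rw [List.mem_flatten] at hv
    obtain ⟨l, hl, hvl⟩ := hv
    rw [List.mem_map] at hl
    obtain ⟨j, hj, rfl⟩ := hl
    rw [List.mem_range] at hj
    rw [List.mem_replicate] at hvl
    have := he (j+1) (Finset.mem_Icc.2 ⟨by omega, by omega⟩)
    rw [Finset.mem_Icc] at this
    omega
  have key : ∀ i : ℕ, 2 ≤ i → i ≤ u →
      dlt (GadgetString A B D u m e c).length
        (fun k => (GadgetString A B D u m e c).getD (k-1) D) ({A, B} : Finset α) i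
        = ((S16.gads u vs).countP (fun p => decide (p.2 = i)) : ℤ) := by
    intro i h2i hiu
    simp only [dlt, hGS]
    rw [S16.lmco_count hAB hAD hBD hu h2vs (w := i) (by omega) hiu,
      S16.lmco_count hAB hAD hBD hu h2vs (w := i - 1) (by omega) (by omega),
      S16.countP_split _ i (by omega)]
    push_cast
    ring
  have hcount : ∀ i : ℕ, (S16.gads u vs).countP (fun p => decide (p.2 = i))
      = ∑ j ∈ Finset.range m, if e (j+1) = i then c (j+1) else 0 := by
    intro i
    rw [S16.countP_snd, hvs, S16.countP_flatten_replicate]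
  constructor
  · intro j hj
    rw [Finset.mem_Icc] at hj
    have hej := he j (Finset.mem_Icc.2 hj)
    rw [Finset.mem_Icc] at hej
    rw [key (e j) hej.1 hej.2, hcount]
    have hnat : (∑ t ∈ Finset.range m, if e (t+1) = e j then c (t+1) else 0) = c j := by
      rw [Finset.sum_eq_single_of_mem (j-1) (Finset.mem_range.2 (by omega))]
      · have hj1 : j - 1 + 1 = j := by omega
        rw [hj1, if_pos rfl]
      · intro b hb hbne
        rw [Finset.mem_range] at hb
        have hb1 : b + 1 ∈ Finset.Icc 1 m := Finset.mem_Icc.2 ⟨by omega, by omega⟩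
        have hjm : j ∈ Finset.Icc 1 m := Finset.mem_Icc.2 hj
        have hne : e (b+1) ≠ e j := by
          rcases Nat.lt_trichotomy (b+1) j with h | h | h
          · exact Nat.ne_of_lt (hmono (b+1) hb1 j hjm h)
          · omega
          · exact Nat.ne_of_gt (hmono j hjm (b+1) hb1 h)
        rw [if_neg hne]
    exact_mod_cast congrArg (Nat.cast : ℕ → ℤ) hnat
  · intro i hi hne
    rw [Finset.mem_Icc] at hi
    rw [key i hi.1 hi.2, hcount]
    have hnat : (∑ t ∈ Finset.range m, if e (t+1) = i then c (t+1) else 0) = 0 := by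
      apply Finset.sum_eq_zero
      intro t ht
      rw [Finset.mem_range] at ht
      exact if_neg (hne (t+1) (Finset.mem_Icc.2 ⟨by omega, by omega⟩))
    exact_mod_cast congrArg (Nat.cast : ℕ → ℤ) hnat
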